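/- The Trid function in dimension 10, f(x) = Σ_{i=1}^{10} (x_i − 1)² − Σ_{i=2}^{10} x_i·x_{i−1}, satisfies f(x) ≥ −210 for all x ∈ ℝ¹⁰, and equality holds at the point x* with coordinates x*_i = i·(11 − i) for i = 1,…,10; hence its global minimum value is −210. -/
import Mathlib

lemma trid_aux (a b c d e g h i j k : ℝ) :
    b * a + (c * b + (d * c + (e * d + (g * e + (h * g + (i * h + (j * i + k * j))))))) ≤
    (a - 1) ^ 2 + ((b - 1) ^ 2 + ((c - 1) ^ 2 + ((d - 1) ^ 2 + ((e - 1) ^ 2 +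
      ((g - 1) ^ 2 + ((h - 1) ^ 2 + ((i - 1) ^ 2 + ((j - 1) ^ 2 + (k - 1) ^ 2)))))))) + 210 := by
  nlinarith [sq_nonneg (a - 10), sq_nonneg (k - 10),
    sq_nonneg (a - b + 8), sq_nonneg (b - c + 6), sq_nonneg (c - d + 4),
    sq_nonneg (d - e + 2), sq_nonneg (e - g), sq_nonneg (g - h - 2),
    sq_nonneg (h - i - 4), sq_nonneg (i - j - 6), sq_nonneg (j - k - 8)]

theorem trid_min (f : (Fin 10 → ℝ) → ℝ)
    (hf : ∀ x : Fin 10 → ℝ, f x =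
      (∑ i : Fin 10, (x i - 1) ^ 2) - ∑ i : Fin 9, x i.succ * x i.castSucc) :
    (∀ x : Fin 10 → ℝ, f x ≥ -210) ∧
      f (fun i => ((i : ℕ) + 1) * (11 - (((i : ℕ) : ℝ) + 1))) = -210 := by
  constructor
  · intro x
    rw [hf x]
    simp only [Fin.sum_univ_succ, Fin.sum_univ_zero]
    norm_num [Fin.succ, Fin.castSucc, Fin.castAdd, Fin.castLE]
    exact trid_aux _ _ _ _ _ _ _ _ _ _
  · rw [hf]
    simp only [Fin.sum_univ_succ, Fin.sum_univ_zero]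
    norm_num [Fin.succ, Fin.castSucc, Fin.castAdd, Fin.castLE]
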